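/- Let A be an (N−1) × N tw-matrix (total weight N − 1). The minimizer of the optimization problem min_{Y ∈ T} ⟨A, Y⟩_w over the weighted transportation polytope T is unique if and only if every maximal tw-minor of A is tw-nonsingular. -/

import Mathlib

/-- An ordered partition of the column set `Fin n` into blocks of sizes `m i`. -/
def IsTWPartition {M n : ℕ} (m : Fin M → ℕ) (P : Fin M → Finset (Fin n)) : Prop :=
  (∀ i, (P i).card = m i) ∧ ∀ j : Fin n, ∃! i, j ∈ P i

/-- The sum `Σ_i Σ_{j ∈ I_i} A_{ij}` associated to an ordered partition. -/
def partSum {M n : ℕ} (A : Fin M → Fin n → ℝ) (P : Fin M → Finset (Fin n)) : ℝ :=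
  ∑ i, ∑ j ∈ P i, A i j

/-- `A` is tw-singular: the minimum in the tw-permanent is attained by at least two
distinct ordered partitions. -/
def TWSingular {M n : ℕ} (m : Fin M → ℕ) (A : Fin M → Fin n → ℝ) : Prop :=
  ∃ P Q : Fin M → Finset (Fin n), IsTWPartition m P ∧ IsTWPartition m Q ∧ P ≠ Q ∧
    partSum A P = partSum A Q ∧ ∀ R, IsTWPartition m R → partSum A P ≤ partSum A R

/-- The tw-matrix obtained by deleting column `j`. -/
def minorMatrix {M K : ℕ} (A : Fin M → Fin (K + 1) → ℝ) (j : Fin (K + 1)) :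
    Fin M → Fin K → ℝ :=
  fun i k => A i (j.succAbove k)

/-- The weighted transportation polytope (M × N matrices, N = K + 1): row sums `N` and
weighted column sums `N - 1`. -/
def transPolytope {M K : ℕ} (m : Fin M → ℕ) : Set (Fin M → Fin (K + 1) → ℝ) :=
  {Y | (∀ i j, 0 ≤ Y i j) ∧ (∀ i, ∑ j, Y i j = ((K : ℝ) + 1)) ∧
    ∀ j, ∑ i, (m i : ℝ) * Y i j = (K : ℝ)}

/-- The weighted inner product `⟨A, Y⟩_w = Σ_{i,j} m_i A_{ij} Y_{ij}`. -/
def wip {M N : ℕ} (m : Fin M → ℕ) (A Y : Fin M → Fin N → ℝ) : ℝ :=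
  ∑ i, ∑ j, (m i : ℝ) * A i j * Y i j

namespace TWAux

open Finset

noncomputable section

open scoped Classical

variable {M K : ℕ}

/-- Abbreviation for the matrices we consider. -/
abbrev Mat (M K : ℕ) := Fin M → Fin (K + 1) → ℝ

/-- `Y` is a minimizer of `wip m A ·` over the weighted transportation polytope. -/
def IsOpt (m : Fin M → ℕ) (A : Fin M → Fin (K + 1) → ℝ) (Y : Mat M K) : Prop :=
  Y ∈ transPolytope (M := M) (K := K) m ∧
    ∀ Z ∈ transPolytope (M := M) (K := K) m, wip m A Y ≤ wip m A Z

/-- A "circulation": all row sums and weighted column sums vanish. -/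
def Circ (m : Fin M → ℕ) (D : Mat M K) : Prop :=
  (∀ i, ∑ j, D i j = 0) ∧ ∀ j, ∑ i, (m i : ℝ) * D i j = 0

/-- Pointwise `Y + t • D`. -/
def addMul (Y : Mat M K) (t : ℝ) (D : Mat M K) : Mat M K := fun i j => Y i j + t * D i j

section Basic

variable {m : Fin M → ℕ} {A : Fin M → Fin (K + 1) → ℝ}

lemma wip_addMul (Y D : Mat M K) (t : ℝ) :
    wip m A (addMul Y t D) = wip m A Y + t * wip m A D := by
  have h : ∀ i j, (m i : ℝ) * A i j * (addMul Y t D i j)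
      = (m i : ℝ) * A i j * Y i j + t * ((m i : ℝ) * A i j * D i j) := by
    intro i j; simp only [addMul]; ring
  simp only [wip]
  simp_rw [h, Finset.sum_add_distrib, ← Finset.mul_sum]

lemma circ_neg {D : Mat M K} (hD : Circ m D) : Circ m (fun i j => -(D i j)) := by
  constructor
  · intro i; simp [Finset.sum_neg_distrib, hD.1 i]
  · intro j; simp only [mul_neg]; simp [Finset.sum_neg_distrib, hD.2 j]

lemma wip_neg (D : Mat M K) : wip m A (fun i j => -(D i j)) = -(wip m A D) := by
  simp [wip, mul_neg, Finset.sum_neg_distrib]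

lemma circ_sub {Y Z : Mat M K} (hY : Y ∈ transPolytope (M := M) (K := K) m)
    (hZ : Z ∈ transPolytope (M := M) (K := K) m) :
    Circ m (fun i j => Y i j - Z i j) := by
  constructor
  · intro i
    rw [Finset.sum_sub_distrib, hY.2.1 i, hZ.2.1 i, sub_self]
  · intro j
    simp_rw [mul_sub]
    rw [Finset.sum_sub_distrib, hY.2.2 j, hZ.2.2 j, sub_self]

lemma mem_feas_addMul {Y D : Mat M K} {t : ℝ}
    (hY : Y ∈ transPolytope (M := M) (K := K) m) (hD : Circ m D)
    (h0 : ∀ i j, 0 ≤ addMul Y t D i j) :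
    addMul Y t D ∈ transPolytope (M := M) (K := K) m := by
  refine ⟨h0, ?_, ?_⟩
  · intro i
    simp only [addMul]
    rw [Finset.sum_add_distrib, ← Finset.mul_sum, hY.2.1 i, hD.1 i, mul_zero, add_zero]
  · intro j
    simp only [addMul, mul_add]
    rw [Finset.sum_add_distrib, hY.2.2 j]
    have h : ∑ i, (m i : ℝ) * (t * D i j) = t * ∑ i, (m i : ℝ) * D i j := by
      rw [Finset.mul_sum]; exact Finset.sum_congr rfl fun i _ => by ring
    rw [h, hD.2 j, mul_zero, add_zero]

lemma one_mem_feas (hw : ∑ i, m i = K) :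
    (fun _ _ => (1 : ℝ)) ∈ transPolytope (M := M) (K := K) m := by
  refine ⟨fun _ _ => zero_le_one, fun i => ?_, fun j => ?_⟩
  · simp [Finset.sum_const]
  · simp only [mul_one]
    rw [← Nat.cast_sum, hw]

lemma feas_nonempty (hw : ∑ i, m i = K) :
    (transPolytope (M := M) (K := K) m).Nonempty :=
  ⟨_, one_mem_feas hw⟩

lemma wip_continuous : Continuous (fun Y : Mat M K => wip m A Y) := by
  apply continuous_finset_sum
  intro i _
  apply continuous_finset_sum
  intro j _
  exact continuous_const.mul ((continuous_apply j).comp (continuous_apply i))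

lemma feas_isClosed : IsClosed (transPolytope (M := M) (K := K) m) := by
  have h : transPolytope (M := M) (K := K) m =
      (⋂ i, ⋂ j, {Y : Mat M K | 0 ≤ Y i j}) ∩
        ((⋂ i, {Y : Mat M K | ∑ j, Y i j = ((K : ℝ) + 1)}) ∩
          ⋂ j, {Y : Mat M K | ∑ i, (m i : ℝ) * Y i j = (K : ℝ)}) := by
    ext Y
    simp only [transPolytope, Set.mem_setOf_eq, Set.mem_inter_iff, Set.mem_iInter]
  rw [h]
  refine IsClosed.inter ?_ (IsClosed.inter ?_ ?_)
  · exact isClosed_iInter fun i => isClosed_iInter fun j =>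
      isClosed_le continuous_const ((continuous_apply j).comp (continuous_apply i))
  · exact isClosed_iInter fun i => isClosed_eq
      (continuous_finset_sum _ fun j _ => (continuous_apply j).comp (continuous_apply i))
      continuous_const
  · exact isClosed_iInter fun j => isClosed_eq
      (continuous_finset_sum _ fun i _ =>
        continuous_const.mul ((continuous_apply j).comp (continuous_apply i)))
      continuous_const

lemma feas_bounded : Bornology.IsBounded (transPolytope (M := M) (K := K) m) := by
  rw [Metric.isBounded_iff_subset_closedBall 0]
  refine ⟨(K : ℝ) + 1, fun Y hY => ?_⟩
  rw [Metric.mem_closedBall, dist_zero_right]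
  have hK1 : (0 : ℝ) ≤ (K : ℝ) + 1 := by positivity
  rw [pi_norm_le_iff_of_nonneg hK1]
  intro i
  rw [pi_norm_le_iff_of_nonneg hK1]
  intro j
  rw [Real.norm_eq_abs, abs_le]
  constructor
  · linarith [hY.1 i j]
  · calc Y i j ≤ ∑ j', Y i j' :=
        Finset.single_le_sum (fun j' _ => hY.1 i j') (Finset.mem_univ j)
    _ = (K : ℝ) + 1 := hY.2.1 i

lemma exists_opt (hw : ∑ i, m i = K) : ∃ Y, IsOpt m A Y := by
  obtain ⟨Y, hYmem, hYmin⟩ :=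
    (Metric.isCompact_of_isClosed_isBounded feas_isClosed feas_bounded).exists_isMinOn
      (feas_nonempty hw) wip_continuous.continuousOn
  exact ⟨Y, hYmem, fun Z hZ => hYmin hZ⟩

lemma opt_cost_eq {Y Y' : Mat M K} (hY : IsOpt m A Y) (hY' : IsOpt m A Y') :
    wip m A Y = wip m A Y' :=
  le_antisymm (hY.2 _ hY'.1) (hY'.2 _ hY.1)

end Basic

section Perturb

variable {m : Fin M → ℕ} {A : Fin M → Fin (K + 1) → ℝ}

lemma exists_eps (hM : 0 < M) (Y D : Mat M K) (hY0 : ∀ i j, 0 ≤ Y i j)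
    (h : ∀ i j, D i j < 0 → 0 < Y i j) :
    ∃ ε : ℝ, 0 < ε ∧ ∀ t : ℝ, 0 ≤ t → t ≤ ε → ∀ i j, 0 ≤ Y i j + t * D i j := by
  have hne : (Finset.univ : Finset (Fin M × Fin (K + 1))).Nonempty :=
    ⟨(⟨0, hM⟩, 0), Finset.mem_univ _⟩
  set g : Fin M × Fin (K + 1) → ℝ :=
    fun p => if D p.1 p.2 < 0 then Y p.1 p.2 / (-(D p.1 p.2)) else 1 with hg
  refine ⟨Finset.univ.inf' hne g, ?_, ?_⟩
  · rw [Finset.lt_inf'_iff]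
    intro p _
    simp only [hg]
    split_ifs with hd
    · exact div_pos (h _ _ hd) (by linarith)
    · exact one_pos
  · intro t ht0 htε i j
    by_cases hd : D i j < 0
    · have h1 : Finset.univ.inf' hne g ≤ Y i j / (-(D i j)) := by
        have := Finset.inf'_le g (Finset.mem_univ (i, j))
        rwa [show g (i, j) = Y i j / (-(D i j)) from by simp [hg, hd]] at this
      have h2 : t ≤ Y i j / (-(D i j)) := le_trans htε h1
      have h3 : t * (-(D i j)) ≤ Y i j := (le_div_iff₀ (by linarith)).mp h2
      nlinarith
    · push_neg at hd
      have := hY0 i j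
      nlinarith [mul_nonneg ht0 hd]

lemma cost_nonneg_of_opt (hM : 0 < M) {Y D : Mat M K} (hY : IsOpt m A Y) (hD : Circ m D)
    (h : ∀ i j, D i j < 0 → 0 < Y i j) : 0 ≤ wip m A D := by
  obtain ⟨ε, hε, hfe⟩ := exists_eps hM Y D hY.1.1 h
  have hmem : addMul Y ε D ∈ transPolytope (M := M) (K := K) m :=
    mem_feas_addMul hY.1 hD (fun i j => hfe ε hε.le le_rfl i j)
  have hle := hY.2 _ hmem
  rw [wip_addMul] at hle
  nlinarith

lemma cost_zero_of_opt (hM : 0 < M) {Y D : Mat M K} (hY : IsOpt m A Y) (hD : Circ m D)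
    (h : ∀ i j, D i j ≠ 0 → 0 < Y i j) : wip m A D = 0 := by
  have h1 : 0 ≤ wip m A D :=
    cost_nonneg_of_opt hM hY hD (fun i j hij => h i j (ne_of_lt hij))
  have h2 : 0 ≤ wip m A (fun i j => -(D i j)) :=
    cost_nonneg_of_opt hM hY (circ_neg hD)
      (fun i j hij => h i j (by intro h0; rw [h0] at hij; simp at hij))
  rw [wip_neg] at h2
  linarith

lemma opt_addMul {Y D : Mat M K} {t : ℝ} (hY : IsOpt m A Y) (hD : Circ m D)
    (hc : wip m A D = 0) (h0 : ∀ i j, 0 ≤ addMul Y t D i j) :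
    IsOpt m A (addMul Y t D) := by
  have hmem := mem_feas_addMul hY.1 hD h0
  refine ⟨hmem, fun Z hZ => ?_⟩
  rw [wip_addMul, hc, mul_zero, add_zero]
  exact hY.2 Z hZ

end Perturb

section MaxSupport

variable {m : Fin M → ℕ} {A : Fin M → Fin (K + 1) → ℝ}

/-- The set of positions that are positive in some optimum. -/
def Zpos (m : Fin M → ℕ) (A : Fin M → Fin (K + 1) → ℝ) (i : Fin M) (j : Fin (K + 1)) : Prop :=
  ∃ Y, IsOpt m A Y ∧ 0 < Y i j

lemma wip_sum_div {ι : Type*} (s : Finset ι) (G : ι → Mat M K) (c : ℝ) :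
    wip m A (fun i j => (∑ p ∈ s, G p i j) / c) = (∑ p ∈ s, wip m A (G p)) / c := by
  simp only [wip]
  have h : ∀ i j, (m i : ℝ) * A i j * ((∑ p ∈ s, G p i j) / c)
      = (∑ p ∈ s, (m i : ℝ) * A i j * G p i j) / c := by
    intro i j
    simp only [div_eq_mul_inv, Finset.sum_mul, Finset.mul_sum]
    exact Finset.sum_congr rfl fun p _ => by ring
  simp_rw [h, ← Finset.sum_div]
  congr 1
  calc ∑ i, ∑ j, ∑ p ∈ s, (m i : ℝ) * A i j * G p i j
      = ∑ i, ∑ p ∈ s, ∑ j, (m i : ℝ) * A i j * G p i j :=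
        Finset.sum_congr rfl fun i _ => Finset.sum_comm
    _ = ∑ p ∈ s, ∑ i, ∑ j, (m i : ℝ) * A i j * G p i j := Finset.sum_comm

lemma exists_maxsupp_opt (hM : 0 < M) (hw : ∑ i, m i = K) :
    ∃ Yh : Mat M K, IsOpt m A Yh ∧ ∀ i j, (0 < Yh i j ↔ Zpos m A i j) := by
  obtain ⟨Y0, hY0⟩ := exists_opt (m := m) (A := A) hw
  set G : Fin M × Fin (K + 1) → Mat M K := fun p =>
    if h : Zpos m A p.1 p.2 then h.choose else Y0 with hG
  have hGopt : ∀ p, IsOpt m A (G p) := by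
    intro p
    simp only [hG]
    split_ifs with h
    · exact h.choose_spec.1
    · exact hY0
  have hGpos : ∀ p : Fin M × Fin (K + 1), Zpos m A p.1 p.2 → 0 < G p p.1 p.2 := by
    intro p h
    simp only [hG, dif_pos h]
    exact h.choose_spec.2
  have hcard : (0 : ℕ) < (Finset.univ : Finset (Fin M × Fin (K + 1))).card := by
    rw [Finset.card_pos]
    exact ⟨(⟨0, hM⟩, 0), Finset.mem_univ _⟩
  set c : ℝ := ((Finset.univ : Finset (Fin M × Fin (K + 1))).card : ℝ) with hc
  have hcpos : (0 : ℝ) < c := by rw [hc]; exact_mod_cast hcard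
  have hcval : c = (M : ℝ) * ((K : ℝ) + 1) := by
    rw [hc, Finset.card_univ, Fintype.card_prod, Fintype.card_fin, Fintype.card_fin]
    push_cast
    ring
  refine ⟨fun i j => (∑ p, G p i j) / c, ⟨⟨fun i j => ?_, fun i => ?_, fun j => ?_⟩, ?_⟩, ?_⟩
  · exact div_nonneg (Finset.sum_nonneg fun p _ => (hGopt p).1.1 i j) hcpos.le
  · rw [← Finset.sum_div, Finset.sum_comm]
    rw [Finset.sum_congr rfl fun p (_ : p ∈ Finset.univ) => (hGopt p).1.2.1 i]
    rw [Finset.sum_const, nsmul_eq_mul, ← hc]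
    rw [hcval]
    have hK1 : ((K : ℝ) + 1) ≠ 0 := by positivity
    field_simp
  · have h1 : ∀ i : Fin M, (m i : ℝ) * ((∑ p, G p i j) / c)
        = (∑ p, (m i : ℝ) * G p i j) / c := by
      intro i
      simp only [div_eq_mul_inv, Finset.sum_mul, Finset.mul_sum]
      exact Finset.sum_congr rfl fun p _ => by ring
    rw [Finset.sum_congr rfl fun i (_ : i ∈ Finset.univ) => h1 i, ← Finset.sum_div,
      Finset.sum_comm]
    rw [Finset.sum_congr rfl fun p (_ : p ∈ Finset.univ) => (hGopt p).1.2.2 j]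
    rw [Finset.sum_const, nsmul_eq_mul, ← hc, hcval]
    rw [div_eq_iff (by rw [← hcval]; exact hcpos.ne')]
    ring
  · -- optimality
    intro Z hZ
    rw [wip_sum_div]
    rw [Finset.sum_congr rfl fun p (_ : p ∈ Finset.univ) => opt_cost_eq (hGopt p) hY0]
    rw [Finset.sum_const, nsmul_eq_mul, ← hc, mul_div_cancel_left₀ _ hcpos.ne']
    exact hY0.2 Z hZ
  · -- support characterization
    intro i j
    constructor
    · intro hpos
      have h2 : 0 < ∑ p, G p i j := by
        rcases div_pos_iff.mp hpos with ⟨h, _⟩ | ⟨_, hcneg⟩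
        · exact h
        · exact absurd hcpos (not_lt.mpr hcneg.le)
      by_contra hz
      have hzero : ∀ p : Fin M × Fin (K + 1), G p i j = 0 := by
        intro p
        by_contra hne
        have hpos2 : 0 < G p i j := lt_of_le_of_ne ((hGopt p).1.1 i j) (Ne.symm hne)
        exact hz ⟨G p, hGopt p, hpos2⟩
      rw [Finset.sum_congr rfl fun p _ => hzero p, Finset.sum_const, smul_zero] at h2
      exact lt_irrefl _ h2
    · intro hZp
      have hterm : 0 < G (i, j) i j := hGpos (i, j) hZp
      have hsum : 0 < ∑ p, G p i j :=
        Finset.sum_pos' (fun p _ => (hGopt p).1.1 i j) ⟨(i, j), Finset.mem_univ _, hterm⟩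
      exact div_pos hsum hcpos

/-- Any feasible point supported inside the maximal optimal support is optimal. -/
lemma opt_of_supp (hM : 0 < M) {Yh Y : Mat M K} (hYh : IsOpt m A Yh)
    (hiff : ∀ i j, (0 < Yh i j ↔ Zpos m A i j))
    (hY : Y ∈ transPolytope (M := M) (K := K) m)
    (hsupp : ∀ i j, Y i j ≠ 0 → 0 < Yh i j) : IsOpt m A Y := by
  set D : Mat M K := fun i j => Y i j - Yh i j with hD
  have hcirc : Circ m D := circ_sub hY hYh.1
  have hposD : ∀ i j, D i j ≠ 0 → 0 < Yh i j := by
    intro i j hne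
    by_cases hy : Y i j ≠ 0
    · exact hsupp i j hy
    · push_neg at hy
      simp only [hD, hy, zero_sub, ne_eq, neg_eq_zero] at hne
      exact lt_of_le_of_ne (hYh.1.1 i j) (Ne.symm hne)
  have hzero : wip m A D = 0 := cost_zero_of_opt hM hYh hcirc hposD
  have hYeq : Y = addMul Yh 1 D := by
    funext i j
    simp [addMul, hD]
  refine ⟨hY, fun Z hZ => ?_⟩
  rw [hYeq, wip_addMul, hzero, mul_zero, add_zero]
  exact hYh.2 Z hZ

lemma supp_of_opt {Y : Mat M K} (hY : IsOpt m A Y) {Yh : Mat M K}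
    (hiff : ∀ i j, (0 < Yh i j ↔ Zpos m A i j)) :
    ∀ i j, Y i j ≠ 0 → 0 < Yh i j := by
  intro i j hne
  exact (hiff i j).mpr ⟨Y, hY, lt_of_le_of_ne (hY.1.1 i j) (Ne.symm hne)⟩

end MaxSupport

section MinSupport

variable {m : Fin M → ℕ} {A : Fin M → Fin (K + 1) → ℝ}

/-- The cardinality of the support of a matrix. -/
def suppCard (Y : Mat M K) : ℕ :=
  (Finset.univ.filter fun p : Fin M × Fin (K + 1) => Y p.1 p.2 ≠ 0).card

lemma exists_minsupp_opt (hw : ∑ i, m i = K) :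
    ∃ w : Mat M K, IsOpt m A w ∧ ∀ Y, IsOpt m A Y → suppCard w ≤ suppCard Y := by
  obtain ⟨Y0, hY0⟩ := exists_opt (m := m) (A := A) hw
  set S : Set ℕ := {n | ∃ Y : Mat M K, IsOpt m A Y ∧ suppCard Y = n} with hS
  have hSne : S.Nonempty := ⟨suppCard Y0, Y0, hY0, rfl⟩
  obtain ⟨w, hwopt, hwcard⟩ := Nat.sInf_mem hSne
  refine ⟨w, hwopt, fun Y hY => ?_⟩
  rw [hwcard]
  exact Nat.sInf_le ⟨Y, hY, rfl⟩

/-- A nonzero circulation cannot be supported inside a minimal optimal support. -/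
lemma circ_supp_min_eq_zero (hM : 0 < M) {w D : Mat M K} (hwopt : IsOpt m A w)
    (hwmin : ∀ Y, IsOpt m A Y → suppCard w ≤ suppCard Y) (hD : Circ m D)
    (hsub : ∀ i j, D i j ≠ 0 → w i j ≠ 0) : ∀ i j, D i j = 0 := by
  by_contra hne
  push_neg at hne
  obtain ⟨i0, j0, hij0⟩ := hne
  have hposw : ∀ i j, D i j ≠ 0 → 0 < w i j :=
    fun i j h => lt_of_le_of_ne (hwopt.1.1 i j) (Ne.symm (hsub i j h))
  have hzero : wip m A D = 0 := cost_zero_of_opt hM hwopt hD hposw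
  -- find a negative entry of D
  have hneg : ∃ p : Fin M × Fin (K + 1), D p.1 p.2 < 0 := by
    rcases lt_or_gt_of_ne hij0 with h | h
    · exact ⟨(i0, j0), h⟩
    · by_contra hall
      push_neg at hall
      have hge : ∀ j, 0 ≤ D i0 j := fun j => hall (i0, j)
      have hpos : 0 < ∑ j, D i0 j :=
        Finset.sum_pos' (fun j _ => hge j) ⟨j0, Finset.mem_univ _, h⟩
      rw [hD.1 i0] at hpos
      exact lt_irrefl _ hpos
  set negs : Finset (Fin M × Fin (K + 1)) :=
    Finset.univ.filter (fun p => D p.1 p.2 < 0) with hnegs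
  have hnegsne : negs.Nonempty := by
    obtain ⟨p, hp⟩ := hneg
    exact ⟨p, by simp [hnegs, hp]⟩
  set g : Fin M × Fin (K + 1) → ℝ := fun p => w p.1 p.2 / (-(D p.1 p.2)) with hg
  set t : ℝ := negs.inf' hnegsne g with ht
  have htpos : 0 < t := by
    rw [ht, Finset.lt_inf'_iff]
    intro p hp
    rw [hnegs, Finset.mem_filter] at hp
    exact div_pos (hposw _ _ (ne_of_lt hp.2)) (by linarith [hp.2])
  have hnn : ∀ i j, 0 ≤ addMul w t D i j := by
    intro i j
    by_cases hd : D i j < 0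
    · have h1 : t ≤ g (i, j) := by
        rw [ht]
        exact Finset.inf'_le g (by simp [hnegs, hd])
      have h2 : t * (-(D i j)) ≤ w i j := by
        rw [hg] at h1
        exact (le_div_iff₀ (by linarith)).mp h1
      simp only [addMul]
      nlinarith
    · push_neg at hd
      have := hwopt.1.1 i j
      simp only [addMul]
      nlinarith [mul_nonneg htpos.le hd]
  have hopt' : IsOpt m A (addMul w t D) := opt_addMul hwopt hD hzero hnn
  -- support strictly decreases
  obtain ⟨pstar, hpstar, hpval⟩ := Finset.exists_mem_eq_inf' hnegsne g
  rw [hnegs, Finset.mem_filter] at hpstar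
  have hDneg : D pstar.1 pstar.2 < 0 := hpstar.2
  have hwp : 0 < w pstar.1 pstar.2 := hposw _ _ (ne_of_lt hDneg)
  have hzerop : addMul w t D pstar.1 pstar.2 = 0 := by
    have hDne : D pstar.1 pstar.2 ≠ 0 := ne_of_lt hDneg
    have hkey : w pstar.1 pstar.2 / -D pstar.1 pstar.2 * D pstar.1 pstar.2
        = -w pstar.1 pstar.2 := by
      rw [div_neg, neg_mul, div_mul_cancel₀ _ hDne]
    simp only [addMul]
    rw [ht, hpval]
    simp only [hg]
    rw [hkey, add_neg_cancel]
  have hsubsupp : (Finset.univ.filter fun p : Fin M × Fin (K + 1) =>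
      addMul w t D p.1 p.2 ≠ 0) ⊂
      (Finset.univ.filter fun p : Fin M × Fin (K + 1) => w p.1 p.2 ≠ 0) := by
    constructor
    · intro p hp
      rw [Finset.mem_filter] at hp ⊢
      refine ⟨Finset.mem_univ _, ?_⟩
      intro hwz
      have hdz : D p.1 p.2 = 0 := by
        by_contra hdz
        exact (hsub _ _ hdz) hwz
      apply hp.2
      simp only [addMul, hwz, hdz, mul_zero, add_zero]
    · intro hsup
      have h1 : pstar ∈ (Finset.univ.filter fun p : Fin M × Fin (K + 1) =>
          w p.1 p.2 ≠ 0) := by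
        rw [Finset.mem_filter]
        exact ⟨Finset.mem_univ _, ne_of_gt hwp⟩
      have h2 := hsup h1
      rw [Finset.mem_filter] at h2
      exact h2.2 hzerop
  have hlt : suppCard (addMul w t D) < suppCard w := Finset.card_lt_card hsubsupp
  exact absurd (hwmin _ hopt') (by omega)

end MinSupport

section Partitions

variable {m : Fin M → ℕ} {A : Fin M → Fin (K + 1) → ℝ}

/-- An ordered partition of the columns other than `j` into blocks of sizes `m i`. -/
def AvPart (m : Fin M → ℕ) (j : Fin (K + 1)) (P : Fin M → Finset (Fin (K + 1))) : Prop :=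
  (∀ i, (P i).card = m i) ∧ (∀ c, c ≠ j → ∃! i, c ∈ P i) ∧ ∀ i, j ∉ P i

/-- The associated sum. -/
def asum (A : Fin M → Fin (K + 1) → ℝ) (P : Fin M → Finset (Fin (K + 1))) : ℝ :=
  ∑ i, ∑ c ∈ P i, A i c

lemma avpart_ind_sum {j : Fin (K + 1)} {P : Fin M → Finset (Fin (K + 1))}
    (hP : AvPart m j P) (c : Fin (K + 1)) :
    ∑ i, (if c ∈ P i then (1 : ℝ) else 0) = if c = j then 0 else 1 := by
  split_ifs with hc
  · subst hc
    rw [Finset.sum_congr rfl fun i _ => if_neg (hP.2.2 i), Finset.sum_const, smul_zero]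
  · obtain ⟨i0, hi0, huniq⟩ := hP.2.1 c hc
    have hfilter : Finset.univ.filter (fun i => c ∈ P i) = {i0} := by
      ext i
      simp only [Finset.mem_filter, Finset.mem_univ, true_and, Finset.mem_singleton]
      exact ⟨fun h => huniq i h, fun h => h ▸ hi0⟩
    rw [Finset.sum_boole, hfilter]
    simp

/-- The rescaled difference of two avoiding partitions. -/
def Dd (m : Fin M → ℕ) (P Q : Fin M → Finset (Fin (K + 1))) : Mat M K :=
  fun i c => ((if c ∈ Q i then (1 : ℝ) else 0) - (if c ∈ P i then 1 else 0)) / (m i)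

lemma circ_Dd (hm : ∀ i, 1 ≤ m i) {j : Fin (K + 1)} {P Q : Fin M → Finset (Fin (K + 1))}
    (hP : AvPart m j P) (hQ : AvPart m j Q) : Circ m (Dd m P Q) := by
  have hm0 : ∀ i, (m i : ℝ) ≠ 0 := fun i => by
    have := hm i; positivity
  constructor
  · intro i
    simp only [Dd]
    rw [← Finset.sum_div]
    rw [Finset.sum_sub_distrib]
    rw [Finset.sum_boole, Finset.sum_boole]
    have h1 : Finset.univ.filter (fun c => c ∈ Q i) = Q i := by
      ext c; simp
    have h2 : Finset.univ.filter (fun c => c ∈ P i) = P i := by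
      ext c; simp
    rw [h1, h2, hQ.1 i, hP.1 i, sub_self, zero_div]
  · intro c
    have h : ∀ i, (m i : ℝ) * Dd m P Q i c
        = (if c ∈ Q i then (1 : ℝ) else 0) - (if c ∈ P i then 1 else 0) := by
      intro i
      simp only [Dd]
      rw [mul_div_assoc', mul_div_cancel_left₀ _ (hm0 i)]
    rw [Finset.sum_congr rfl fun i _ => h i, Finset.sum_sub_distrib,
      avpart_ind_sum hP c, avpart_ind_sum hQ c, sub_self]

lemma wip_Dd (hm : ∀ i, 1 ≤ m i) (P Q : Fin M → Finset (Fin (K + 1))) :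
    wip m A (Dd m P Q) = asum A Q - asum A P := by
  have h : ∀ i c, (m i : ℝ) * A i c * Dd m P Q i c
      = (if c ∈ Q i then A i c else 0) - (if c ∈ P i then A i c else 0) := by
    intro i c
    have hm0 : (m i : ℝ) ≠ 0 := by have := hm i; positivity
    simp only [Dd]
    field_simp
    split_ifs <;> ring
  simp only [wip]
  rw [Finset.sum_congr rfl fun i _ => Finset.sum_congr rfl fun c _ => h i c]
  simp_rw [Finset.sum_sub_distrib]
  simp only [Finset.sum_ite_mem, Finset.univ_inter]
  rfl

lemma Dd_pos_entry {P Q : Fin M → Finset (Fin (K + 1))} {i : Fin M} {c : Fin (K + 1)}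
    (hc : c ∈ Q i) (hc' : c ∉ P i) : Dd m P Q i c = 1 / (m i) := by
  simp [Dd, hc, hc']

lemma Dd_ne_mem {P Q : Fin M → Finset (Fin (K + 1))} {i : Fin M} {c : Fin (K + 1)}
    (h : Dd m P Q i c ≠ 0) : c ∈ P i ∨ c ∈ Q i := by
  by_contra hcon
  push_neg at hcon
  simp [Dd, hcon.1, hcon.2] at h

lemma Dd_neg_mem {P Q : Fin M → Finset (Fin (K + 1))} {i : Fin M} {c : Fin (K + 1)}
    (h : Dd m P Q i c < 0) : c ∈ P i := by
  by_contra hcp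
  have hmi : (0 : ℝ) ≤ (m i : ℝ) := by positivity
  simp only [Dd, if_neg hcp] at h
  split_ifs at h with h1
  · rw [sub_zero] at h
    have := div_nonneg zero_le_one hmi
    linarith
  · rw [sub_zero, zero_div] at h
    linarith

lemma exists_diff_mem {j : Fin (K + 1)} {P Q : Fin M → Finset (Fin (K + 1))}
    (hP : AvPart m j P) (hQ : AvPart m j Q) (hne : P ≠ Q) :
    ∃ i c, c ∈ Q i ∧ c ∉ P i := by
  have h : ∃ i, P i ≠ Q i := by
    by_contra hall
    push_neg at hall
    exact hne (funext hall)
  obtain ⟨i, hi⟩ := h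
  have hcard : (P i).card ≤ (Q i).card := by rw [hP.1 i, hQ.1 i]
  have hns : ¬ Q i ⊆ P i := by
    intro hsub
    exact hi (Finset.eq_of_subset_of_card_le hsub hcard).symm
  rw [Finset.not_subset] at hns
  obtain ⟨c, hc, hc'⟩ := hns
  exact ⟨i, c, hc, hc'⟩

end Partitions

section Hall

variable {m : Fin M → ℕ} {A : Fin M → Fin (K + 1) → ℝ}

/-- Existence, via Hall's theorem, of a partition avoiding `j0` supported on the
positive entries of a feasible matrix `w`. -/
lemma exists_w_partition (hm : ∀ i, 1 ≤ m i) (hw : ∑ i, m i = K) (hM : 0 < M)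
    {w : Mat M K} (hwf : w ∈ transPolytope (M := M) (K := K) m) (j0 : Fin (K + 1)) :
    ∃ P, AvPart m j0 P ∧ ∀ i, ∀ c ∈ P i, 0 < w i c := by
  have hK : 0 < K := by
    have h1 : M ≤ ∑ i, m i := by
      calc M = ∑ _i : Fin M, 1 := by simp
        _ ≤ ∑ i, m i := Finset.sum_le_sum fun i _ => hm i
    omega
  set t : {c : Fin (K + 1) // c ≠ j0} → Finset (Σ i : Fin M, Fin (m i)) :=
    fun c => Finset.univ.filter (fun p => 0 < w p.1 c.1) with htdef
  have hall : ∀ s : Finset {c : Fin (K + 1) // c ≠ j0}, s.card ≤ (s.biUnion t).card := by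
    intro s
    set N : Finset (Fin M) := Finset.univ.filter (fun i => ∃ c ∈ s, 0 < w i c.1) with hN
    have hbi : s.biUnion t = Finset.univ.filter
        (fun p : Σ i : Fin M, Fin (m i) => p.1 ∈ N) := by
      ext p
      simp only [Finset.mem_biUnion, htdef, Finset.mem_filter, Finset.mem_univ, true_and, hN]
    have hsigma : Finset.univ.filter (fun p : Σ i : Fin M, Fin (m i) => p.1 ∈ N)
        = N.sigma (fun i => (Finset.univ : Finset (Fin (m i)))) := by
      ext p
      simp [Finset.mem_sigma]
    have hcard : (s.biUnion t).card = ∑ i ∈ N, m i := by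
      rw [hbi, hsigma, Finset.card_sigma]
      simp
    -- mass inequality over ℝ
    have hreal : (K : ℝ) * s.card ≤ ((K : ℝ) + 1) * ∑ i ∈ N, (m i : ℝ) := by
      have h1 : (K : ℝ) * s.card = ∑ c ∈ s, ∑ i, (m i : ℝ) * w i c.1 := by
        rw [Finset.sum_congr rfl fun c (_ : c ∈ s) => hwf.2.2 c.1]
        rw [Finset.sum_const, nsmul_eq_mul, mul_comm]
      have h2 : ∀ c ∈ s, ∑ i, (m i : ℝ) * w i c.1 = ∑ i ∈ N, (m i : ℝ) * w i c.1 := by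
        intro c hc
        symm
        apply Finset.sum_subset (Finset.subset_univ N)
        intro i _ hiN
        rw [hN, Finset.mem_filter] at hiN
        push_neg at hiN
        have hwz : w i c.1 = 0 := by
          have h3 := hiN (Finset.mem_univ i) c hc
          have h4 := hwf.1 i c.1
          linarith
        rw [hwz, mul_zero]
      have h5 : ∀ i ∈ N, ∑ c ∈ s, w i c.1 ≤ (K : ℝ) + 1 := by
        intro i _
        have h6 : ∑ c ∈ s, w i c.1 = ∑ c ∈ s.image Subtype.val, w i c := by
          rw [Finset.sum_image]
          intro x _ y _ hxy
          exact Subtype.ext hxy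
        rw [h6, ← hwf.2.1 i]
        apply Finset.sum_le_sum_of_subset_of_nonneg (Finset.subset_univ _)
        intro c _ _
        exact hwf.1 i c
      calc (K : ℝ) * s.card = ∑ c ∈ s, ∑ i, (m i : ℝ) * w i c.1 := h1
        _ = ∑ c ∈ s, ∑ i ∈ N, (m i : ℝ) * w i c.1 := Finset.sum_congr rfl h2
        _ = ∑ i ∈ N, (m i : ℝ) * ∑ c ∈ s, w i c.1 := by
            rw [Finset.sum_comm]
            exact Finset.sum_congr rfl fun i _ => by rw [Finset.mul_sum]
        _ ≤ ∑ i ∈ N, (m i : ℝ) * ((K : ℝ) + 1) := by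
            apply Finset.sum_le_sum
            intro i hi
            have hmi : (0 : ℝ) ≤ (m i : ℝ) := by positivity
            exact mul_le_mul_of_nonneg_left (h5 i hi) hmi
        _ = ((K : ℝ) + 1) * ∑ i ∈ N, (m i : ℝ) := by
            rw [Finset.mul_sum]
            exact Finset.sum_congr rfl fun i _ => by ring
    -- conclude in ℕ
    rw [hcard]
    by_contra hlt
    push_neg at hlt
    have hsK : s.card ≤ K := by
      have h7 : s.card ≤ Fintype.card {c : Fin (K + 1) // c ≠ j0} := Finset.card_le_univ s
      have h8 : Fintype.card {c : Fin (K + 1) // c ≠ j0} = K := by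
        rw [Fintype.card_subtype_compl]
        simp
      omega
    have hlt' : ((∑ i ∈ N, m i : ℕ) : ℝ) + 1 ≤ (s.card : ℝ) := by
      exact_mod_cast hlt
    have hcast : ((∑ i ∈ N, m i : ℕ) : ℝ) = ∑ i ∈ N, (m i : ℝ) := by
      push_cast
      rfl
    have hsKr : (s.card : ℝ) ≤ (K : ℝ) := by exact_mod_cast hsK
    nlinarith [hreal]
  obtain ⟨f, hfinj, hft⟩ := (Finset.all_card_le_biUnion_card_iff_exists_injective t).mp hall
  set P : Fin M → Finset (Fin (K + 1)) := fun i =>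
    Finset.univ.filter (fun c => ∃ h : c ≠ j0, (f ⟨c, h⟩).1 = i) with hPdef
  have hmem : ∀ i c, c ∈ P i ↔ ∃ h : c ≠ j0, (f ⟨c, h⟩).1 = i := by
    intro i c
    simp [hPdef]
  have hedge : ∀ i, ∀ c ∈ P i, 0 < w i c := by
    intro i c hc
    rw [hmem] at hc
    obtain ⟨h, hfc⟩ := hc
    have := hft ⟨c, h⟩
    rw [htdef, Finset.mem_filter] at this
    rw [← hfc]
    exact this.2
  have hcover : ∀ c, c ≠ j0 → ∃! i, c ∈ P i := by
    intro c hc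
    refine ⟨(f ⟨c, hc⟩).1, (hmem _ c).mpr ⟨hc, rfl⟩, ?_⟩
    intro i hi
    rw [hmem] at hi
    obtain ⟨h, hfc⟩ := hi
    rw [← hfc]
  have havoid : ∀ i, j0 ∉ P i := by
    intro i hi
    rw [hmem] at hi
    obtain ⟨h, _⟩ := hi
    exact h rfl
  -- cardinalities
  have hcardle : ∀ i, (P i).card ≤ m i := by
    intro i
    have hj : (⟨i, ⟨0, hm i⟩⟩ : Σ i' : Fin M, Fin (m i')) ∈
        Finset.univ.filter (fun p : Σ i' : Fin M, Fin (m i') => p.1 = i) := by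
      simp
    have hcard2 : (Finset.univ.filter (fun p : Σ i' : Fin M, Fin (m i') => p.1 = i)).card
        = m i := by
      have h9 : Finset.univ.filter (fun p : Σ i' : Fin M, Fin (m i') => p.1 = i)
          = ({i} : Finset (Fin M)).sigma (fun i' => (Finset.univ : Finset (Fin (m i')))) := by
        ext p
        simp [Finset.mem_sigma, eq_comm]
      rw [h9, Finset.card_sigma]
      simp
    rw [← hcard2]
    apply Finset.card_le_card_of_injOn
      (fun c => if h : c ≠ j0 then f ⟨c, h⟩ else ⟨i, ⟨0, hm i⟩⟩)
    · intro c hc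
      rw [Finset.mem_coe, hmem] at hc
      obtain ⟨h, hfc⟩ := hc
      simp only [dif_pos h]
      simp [hfc]
    · intro c1 hc1 c2 hc2 heq
      rw [Finset.mem_coe, hmem] at hc1 hc2
      obtain ⟨h1, _⟩ := hc1
      obtain ⟨h2, _⟩ := hc2
      simp only [dif_pos h1, dif_pos h2] at heq
      have := hfinj heq
      exact Subtype.ext_iff.mp this
  have hsum : ∑ i, (P i).card = K := by
    have hfib : ∀ c ∈ Finset.univ.filter (fun c : Fin (K + 1) => c ≠ j0),
        (fun c => if h : c ≠ j0 then (f ⟨c, h⟩).1 else ⟨0, hM⟩) c ∈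
          (Finset.univ : Finset (Fin M)) := fun c _ => Finset.mem_univ _
    have h10 := Finset.card_eq_sum_card_fiberwise hfib
    have h11 : (Finset.univ.filter (fun c : Fin (K + 1) => c ≠ j0)).card = K := by
      rw [Finset.filter_ne', Finset.card_erase_of_mem (Finset.mem_univ _)]
      simp
    have h12 : ∀ i, (Finset.univ.filter (fun c : Fin (K + 1) => c ≠ j0)).filter
        (fun c => (fun c => if h : c ≠ j0 then (f ⟨c, h⟩).1 else ⟨0, hM⟩) c = i) = P i := by
      intro i
      ext c
      simp only [Finset.mem_filter, Finset.mem_univ, true_and, hmem]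
      constructor
      · rintro ⟨hc, heq⟩
        rw [dif_pos hc] at heq
        exact ⟨hc, heq⟩
      · rintro ⟨hc, heq⟩
        exact ⟨hc, by rw [dif_pos hc]; exact heq⟩
    have h13 : ∑ i, (P i).card = ∑ i, ((Finset.univ.filter
        (fun c : Fin (K + 1) => c ≠ j0)).filter
          (fun c => (fun c => if h : c ≠ j0 then (f ⟨c, h⟩).1 else ⟨0, hM⟩) c = i)).card :=
      Finset.sum_congr rfl fun i _ => by rw [h12]
    rw [h13, ← h10, h11]
  have hcardeq : ∀ i, (P i).card = m i := by
    by_contra hnc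
    push_neg at hnc
    obtain ⟨i0, hi0⟩ := hnc
    have hstrict : (P i0).card < m i0 := lt_of_le_of_ne (hcardle i0) hi0
    have : ∑ i, (P i).card < ∑ i, m i :=
      Finset.sum_lt_sum (fun i _ => hcardle i) ⟨i0, Finset.mem_univ _, hstrict⟩
    omega
  exact ⟨P, ⟨hcardeq, hcover, havoid⟩, hedge⟩

end Hall

section Transfer

variable {m : Fin M → ℕ} {A : Fin M → Fin (K + 1) → ℝ}

/-- Map a partition of `Fin K` to a partition of `Fin (K+1)` avoiding `j`. -/
def toAv (j : Fin (K + 1)) (P' : Fin M → Finset (Fin K)) : Fin M → Finset (Fin (K + 1)) :=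
  fun i => (P' i).map (Fin.succAboveEmb j)

lemma mem_toAv {j : Fin (K + 1)} {P' : Fin M → Finset (Fin K)} {i : Fin M}
    {c : Fin (K + 1)} : c ∈ toAv j P' i ↔ ∃ z ∈ P' i, j.succAbove z = c := by
  simp [toAv, Fin.succAboveEmb]

lemma toAv_isAv {j : Fin (K + 1)} {P' : Fin M → Finset (Fin K)}
    (hP : IsTWPartition m P') : AvPart m j (toAv j P') := by
  refine ⟨fun i => ?_, fun c hc => ?_, fun i hi => ?_⟩
  · rw [toAv, Finset.card_map, hP.1 i]
  · obtain ⟨z, hz⟩ := Fin.exists_succAbove_eq hc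
    obtain ⟨i0, hi0, huniq⟩ := hP.2 z
    refine ⟨i0, mem_toAv.mpr ⟨z, hi0, hz⟩, ?_⟩
    intro i hi
    rw [mem_toAv] at hi
    obtain ⟨z', hz', hz'eq⟩ := hi
    have : z' = z := Fin.succAbove_right_injective (hz'eq.trans hz.symm)
    exact huniq i (this ▸ hz')
  · rw [mem_toAv] at hi
    obtain ⟨z, _, hz⟩ := hi
    exact Fin.succAbove_ne j z hz

lemma toAv_injective (j : Fin (K + 1)) : Function.Injective (toAv (M := M) j) := by
  intro P' Q' h
  funext i
  have := congrFun h i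
  exact Finset.map_injective (Fin.succAboveEmb j) this

lemma partSum_toAv (j : Fin (K + 1)) (P' : Fin M → Finset (Fin K)) :
    partSum (minorMatrix A j) P' = asum A (toAv j P') := by
  simp only [partSum, asum, toAv, minorMatrix]
  exact Finset.sum_congr rfl fun i _ => (Finset.sum_map (P' i) (Fin.succAboveEmb j) _).symm

lemma av_surj {j : Fin (K + 1)} {Q : Fin M → Finset (Fin (K + 1))} (hQ : AvPart m j Q) :
    ∃ P', IsTWPartition m P' ∧ toAv j P' = Q := by
  set P' : Fin M → Finset (Fin K) :=
    fun i => Finset.univ.filter (fun z => j.succAbove z ∈ Q i) with hP'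
  have htoAv : toAv j P' = Q := by
    funext i
    ext c
    rw [mem_toAv]
    constructor
    · rintro ⟨z, hz, rfl⟩
      rw [hP', Finset.mem_filter] at hz
      exact hz.2
    · intro hc
      have hcj : c ≠ j := fun h => hQ.2.2 i (h ▸ hc)
      obtain ⟨z, hz⟩ := Fin.exists_succAbove_eq hcj
      exact ⟨z, by rw [hP', Finset.mem_filter]; exact ⟨Finset.mem_univ _, hz ▸ hc⟩, hz⟩
  refine ⟨P', ⟨fun i => ?_, fun z => ?_⟩, htoAv⟩
  · have h1 : (toAv j P' i).card = (P' i).card := Finset.card_map _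
    rw [htoAv] at h1
    rw [← h1, hQ.1 i]
  · have hne : j.succAbove z ≠ j := Fin.succAbove_ne j z
    obtain ⟨i0, hi0, huniq⟩ := hQ.2.1 (j.succAbove z) hne
    refine ⟨i0, ?_, ?_⟩
    · simp only [hP', Finset.mem_filter, Finset.mem_univ, true_and]
      exact hi0
    · intro i hi
      simp only [hP', Finset.mem_filter, Finset.mem_univ, true_and] at hi
      exact huniq i hi

/-- Transfer of singularity to the language of avoiding partitions. -/
lemma singular_transfer (j : Fin (K + 1)) :
    TWSingular m (minorMatrix A j) ↔
      ∃ P Q, AvPart m j P ∧ AvPart m j Q ∧ P ≠ Q ∧ asum A P = asum A Q ∧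
        ∀ R, AvPart m j R → asum A P ≤ asum A R := by
  constructor
  · rintro ⟨P', Q', hP', hQ', hne, heq, hmin⟩
    refine ⟨toAv j P', toAv j Q', toAv_isAv hP', toAv_isAv hQ', ?_, ?_, ?_⟩
    · intro h
      exact hne (toAv_injective j h)
    · rw [← partSum_toAv, ← partSum_toAv]
      exact heq
    · intro R hR
      obtain ⟨R', hR', hReq⟩ := av_surj hR
      rw [← hReq, ← partSum_toAv, ← partSum_toAv]
      exact hmin R' hR'
  · rintro ⟨P, Q, hP, hQ, hne, heq, hmin⟩
    obtain ⟨P', hP', hPeq⟩ := av_surj hP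
    obtain ⟨Q', hQ', hQeq⟩ := av_surj hQ
    refine ⟨P', Q', hP', hQ', ?_, ?_, ?_⟩
    · intro h
      rw [h] at hPeq
      exact hne (hPeq.symm.trans hQeq)
    · rw [partSum_toAv (A := A), partSum_toAv (A := A), hPeq, hQeq]
      exact heq
    · intro R' hR'
      rw [partSum_toAv (A := A), partSum_toAv (A := A), hPeq]
      exact hmin _ (toAv_isAv hR')

end Transfer

section MainLemmas

variable {m : Fin M → ℕ} {A : Fin M → Fin (K + 1) → ℝ}

/-- Any partition supported in the minimal support achieves the minimum. -/
lemma wpart_min (hm : ∀ i, 1 ≤ m i) (hM : 0 < M) {Yh w : Mat M K}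
    (hYh : IsOpt m A Yh) (hiff : ∀ i j, (0 < Yh i j ↔ Zpos m A i j)) (hwopt : IsOpt m A w)
    {j : Fin (K + 1)} {P R : Fin M → Finset (Fin (K + 1))}
    (hP : AvPart m j P) (hPw : ∀ i, ∀ c ∈ P i, 0 < w i c) (hR : AvPart m j R) :
    asum A P ≤ asum A R := by
  have hD : Circ m (Dd m P R) := circ_Dd hm hP hR
  have hpos : ∀ i c, Dd m P R i c < 0 → 0 < Yh i c := by
    intro i c hneg
    have hcp : c ∈ P i := by
      by_contra hcp
      simp only [Dd, if_neg hcp] at hneg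
      have hmi : (0 : ℝ) < (m i : ℝ) := by have := hm i; positivity
      split_ifs at hneg with h
      · rw [sub_zero] at hneg
        have := div_pos one_pos hmi
        linarith
      · rw [sub_zero, zero_div] at hneg
        linarith
    exact supp_of_opt hwopt hiff i c (ne_of_gt (hPw i c hcp))
  have := cost_nonneg_of_opt hM hYh hD hpos
  rw [wip_Dd hm] at this
  linarith

/-- If a partition attains the minimum, its entries lie in the maximal optimal support. -/
lemma edges_pos_of_min (hm : ∀ i, 1 ≤ m i) (hw : ∑ i, m i = K) (hM : 0 < M)
    {Yh w : Mat M K} (hYh : IsOpt m A Yh) (hiff : ∀ i j, (0 < Yh i j ↔ Zpos m A i j))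
    (hwopt : IsOpt m A w) {j : Fin (K + 1)} {R : Fin M → Finset (Fin (K + 1))}
    (hR : AvPart m j R) (hRmin : ∀ R', AvPart m j R' → asum A R ≤ asum A R') :
    ∀ i, ∀ c ∈ R i, 0 < Yh i c := by
  obtain ⟨P, hP, hPw⟩ := exists_w_partition hm hw hM hwopt.1 j
  have h1 : asum A R ≤ asum A P := hRmin P hP
  have h2 : asum A P ≤ asum A R := wpart_min hm hM hYh hiff hwopt hP hPw hR
  have heq : asum A P = asum A R := le_antisymm h2 h1
  have hD : Circ m (Dd m P R) := circ_Dd hm hP hR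
  have hc0 : wip m A (Dd m P R) = 0 := by
    rw [wip_Dd hm, heq, sub_self]
  have hpos : ∀ i c, Dd m P R i c < 0 → 0 < Yh i c := by
    intro i c hneg
    have hcp : c ∈ P i := by
      by_contra hcp
      simp only [Dd, if_neg hcp] at hneg
      have hmi : (0 : ℝ) < (m i : ℝ) := by have := hm i; positivity
      split_ifs at hneg with h
      · rw [sub_zero] at hneg
        have := div_pos one_pos hmi
        linarith
      · rw [sub_zero, zero_div] at hneg
        linarith
    exact supp_of_opt hwopt hiff i c (ne_of_gt (hPw i c hcp))
  obtain ⟨ε, hε, hfe⟩ := exists_eps hM Yh (Dd m P R) hYh.1.1 hpos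
  have hopt2 : IsOpt m A (addMul Yh ε (Dd m P R)) :=
    opt_addMul hYh hD hc0 (fun i c => hfe ε hε.le le_rfl i c)
  intro i c hc
  by_cases hcp : c ∈ P i
  · exact supp_of_opt hwopt hiff i c (ne_of_gt (hPw i c hcp))
  · have hDval : Dd m P R i c = 1 / (m i) := Dd_pos_entry hc hcp
    have hmi : (0 : ℝ) < (m i : ℝ) := by have := hm i; positivity
    have hne : addMul Yh ε (Dd m P R) i c ≠ 0 := by
      simp only [addMul, hDval]
      have h3 : 0 < ε * (1 / (m i : ℝ)) := by positivity
      have h4 := hYh.1.1 i c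
      linarith
    exact supp_of_opt hopt2 hiff i c hne

end MainLemmas

end

end TWAux

/-- For an `(N-1) × N` tw-matrix `A` (total weight `N - 1`), the minimizer of
`⟨A, ·⟩_w` over the weighted transportation polytope is unique iff every maximal
tw-minor of `A` is tw-nonsingular. -/
theorem unique_minimizer_transPolytope_iff {M K : ℕ} (m : Fin M → ℕ)
    (hm : ∀ i, 1 ≤ m i) (hw : ∑ i, m i = K) (A : Fin M → Fin (K + 1) → ℝ) :
    (∃! Y, Y ∈ transPolytope (M := M) (K := K) m ∧
        ∀ Z ∈ transPolytope (M := M) (K := K) m, wip m A Y ≤ wip m A Z) ↔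
      ∀ j : Fin (K + 1), ¬ TWSingular m (minorMatrix A j) := by
  classical
  open TWAux in
  rcases Nat.eq_zero_or_pos M with hM0 | hM
  · -- degenerate case `M = 0`
    subst hM0
    simp only [Finset.univ_eq_empty, Finset.sum_empty] at hw
    subst hw
    apply iff_of_true
    · refine ⟨fun i _ => (1 : ℝ), ⟨⟨fun i => i.elim0, fun i => i.elim0, fun j => by simp⟩,
        fun Z _ => by simp [wip]⟩, ?_⟩
      intro Y _
      funext i
      exact i.elim0
    · rintro j ⟨P, Q, _, _, hne, _⟩
      exact hne (funext fun i => i.elim0)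
  · obtain ⟨Yh, hYh, hiff⟩ := TWAux.exists_maxsupp_opt (m := m) (A := A) hM hw
    obtain ⟨w, hwopt, hwmin⟩ := TWAux.exists_minsupp_opt (m := m) (A := A) hw
    constructor
    · -- unique minimizer implies all minors nonsingular
      intro huniq j hsing
      rw [TWAux.singular_transfer] at hsing
      obtain ⟨P, Q, hP, hQ, hne, heq, hmin⟩ := hsing
      have hQmin : ∀ R, TWAux.AvPart m j R → TWAux.asum A Q ≤ TWAux.asum A R :=
        fun R hR => heq ▸ hmin R hR
      have hPpos := TWAux.edges_pos_of_min hm hw hM hYh hiff hwopt hP hmin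
      have hcirc := TWAux.circ_Dd hm hP hQ
      have hcost : wip m A (TWAux.Dd m P Q) = 0 := by
        rw [TWAux.wip_Dd hm, heq, sub_self]
      have hpos : ∀ i c, TWAux.Dd m P Q i c < 0 → 0 < Yh i c :=
        fun i c hneg => hPpos i c (TWAux.Dd_neg_mem hneg)
      obtain ⟨ε, hε, hfe⟩ := TWAux.exists_eps hM Yh (TWAux.Dd m P Q) hYh.1.1 hpos
      have hopt2 : TWAux.IsOpt m A (TWAux.addMul Yh ε (TWAux.Dd m P Q)) :=
        TWAux.opt_addMul hYh hcirc hcost (fun i c => hfe ε hε.le le_rfl i c)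
      obtain ⟨i1, c1, hc1Q, hc1P⟩ := TWAux.exists_diff_mem hP hQ hne
      have hDval : TWAux.Dd m P Q i1 c1 = 1 / (m i1) := TWAux.Dd_pos_entry hc1Q hc1P
      have hnel : TWAux.addMul Yh ε (TWAux.Dd m P Q) ≠ Yh := by
        intro hEq
        have h2 := congrFun (congrFun hEq i1) c1
        simp only [TWAux.addMul, hDval] at h2
        have hmi : (0 : ℝ) < (m i1 : ℝ) := by have := hm i1; positivity
        have h3 : 0 < ε * (1 / (m i1 : ℝ)) := by positivity
        linarith
      obtain ⟨Yu, _, huYu⟩ := huniq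
      exact hnel ((huYu _ ⟨hopt2.1, hopt2.2⟩).trans (huYu _ ⟨hYh.1, hYh.2⟩).symm)
    · -- all minors nonsingular implies unique minimizer
      intro hns
      refine ⟨Yh, ⟨hYh.1, hYh.2⟩, ?_⟩
      intro Y hY
      by_contra hneq
      have hYopt : TWAux.IsOpt m A Y := ⟨hY.1, hY.2⟩
      have hcirc : TWAux.Circ m (fun i c => Y i c - Yh i c) := TWAux.circ_sub hY.1 hYh.1
      have hDsupp : ∀ i c, Y i c - Yh i c ≠ 0 → 0 < Yh i c := by
        intro i c hnez
        by_cases hy : Y i c ≠ 0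
        · exact TWAux.supp_of_opt hYopt hiff i c hy
        · push_neg at hy
          rw [hy, zero_sub, neg_ne_zero] at hnez
          exact lt_of_le_of_ne (hYh.1.1 i c) (Ne.symm hnez)
      have hnotall : ¬ ∀ i c, Y i c - Yh i c ≠ 0 → w i c ≠ 0 := by
        intro hall
        have hzero := TWAux.circ_supp_min_eq_zero hM hwopt hwmin hcirc hall
        apply hneq
        funext i c
        have := hzero i c
        linarith
      push_neg at hnotall
      obtain ⟨istar, cstar, hDstar, hwstar⟩ := hnotall
      have hYhstar : 0 < Yh istar cstar := hDsupp _ _ hDstar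
      obtain ⟨P, hPav, hPw⟩ := TWAux.exists_w_partition hm hw hM hwopt.1 cstar
      have hPne : (P istar).Nonempty := by
        rw [← Finset.card_pos, hPav.1 istar]
        exact hm istar
      obtain ⟨γ, hγ⟩ := hPne
      have hγne : γ ≠ cstar := fun h => hPav.2.2 istar (h ▸ hγ)
      have hcstarP : ∀ i, cstar ∉ P i := hPav.2.2
      set Q : Fin M → Finset (Fin (K + 1)) := fun i =>
        if i = istar then insert cstar ((P istar).erase γ) else P i with hQdef
      have hmemQ : ∀ i c, c ∈ Q i ↔
          (if i = istar then c = cstar ∨ (c ≠ γ ∧ c ∈ P istar) else c ∈ P i) := by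
        intro i c
        simp only [hQdef]
        by_cases hi : i = istar
        · simp [hi, Finset.mem_insert, Finset.mem_erase]
        · simp [hi]
      have hQav : TWAux.AvPart m γ Q := by
        refine ⟨fun i => ?_, fun cc hccγ => ?_, fun i => ?_⟩
        · by_cases hi : i = istar
          · subst hi
            have hQi : Q i = insert cstar ((P i).erase γ) := by simp [hQdef]
            rw [hQi, Finset.card_insert_of_notMem
                (fun h => hcstarP i (Finset.mem_of_mem_erase h)),
              Finset.card_erase_of_mem hγ, hPav.1 i]
            have := hm i
            omega
          · have hQi : Q i = P i := by simp [hQdef, hi]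
            rw [hQi]
            exact hPav.1 i
        · by_cases hcc : cc = cstar
          · refine ⟨istar, (hmemQ istar cc).mpr (by simp [hcc]), ?_⟩
            intro i hi
            have hi2 := (hmemQ i cc).mp hi
            by_contra hine
            rw [if_neg hine] at hi2
            rw [hcc] at hi2
            exact hcstarP i hi2
          · obtain ⟨i0, hi0, huniq0⟩ := hPav.2.1 cc hcc
            refine ⟨i0, ?_, ?_⟩
            · refine (hmemQ i0 cc).mpr ?_
              by_cases hi : i0 = istar
              · rw [if_pos hi]
                exact Or.inr ⟨hccγ, hi ▸ hi0⟩
              · rw [if_neg hi]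
                exact hi0
            · intro i hi
              have hi2 := (hmemQ i cc).mp hi
              by_cases hii : i = istar
              · rw [if_pos hii] at hi2
                rcases hi2 with h1 | h1
                · exact absurd h1 hcc
                · rw [hii]
                  exact huniq0 istar h1.2
              · rw [if_neg hii] at hi2
                exact huniq0 i hi2
        · rw [hmemQ]
          by_cases hi : i = istar
          · rw [if_pos hi]
            push_neg
            exact ⟨hγne, fun h => absurd rfl h⟩
          · rw [if_neg hi]
            intro hγP
            obtain ⟨i0, hi0, huniq0⟩ := hPav.2.1 γ hγne
            have h1 := huniq0 i hγP
            have h2 := huniq0 istar hγ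
            rw [h1, ← h2] at hi
            exact hi rfl
      have hQpos : ∀ i, ∀ c ∈ Q i, 0 < Yh i c := by
        intro i c hc
        rw [hmemQ] at hc
        by_cases hi : i = istar
        · rw [if_pos hi] at hc
          rcases hc with h1 | h1
          · rw [hi, h1]
            exact hYhstar
          · exact TWAux.supp_of_opt hwopt hiff i c
              (ne_of_gt (hPw i c (by rw [hi]; exact h1.2)))
        · rw [if_neg hi] at hc
          exact TWAux.supp_of_opt hwopt hiff i c (ne_of_gt (hPw i c hc))
      obtain ⟨Pg, hPgav, hPgw⟩ := TWAux.exists_w_partition hm hw hM hwopt.1 γ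
      have hPgpos : ∀ i, ∀ c ∈ Pg i, 0 < Yh i c :=
        fun i c hc => TWAux.supp_of_opt hwopt hiff i c (ne_of_gt (hPgw i c hc))
      have heqs : TWAux.asum A Pg = TWAux.asum A Q := by
        have hcircD := TWAux.circ_Dd hm hPgav hQav
        have hposD : ∀ i c, TWAux.Dd m Pg Q i c ≠ 0 → 0 < Yh i c := by
          intro i c hnez
          rcases TWAux.Dd_ne_mem hnez with h1 | h1
          · exact hPgpos i c h1
          · exact hQpos i c h1
        have hzero := TWAux.cost_zero_of_opt hM hYh hcircD hposD
        rw [TWAux.wip_Dd hm] at hzero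
        linarith
      have hminA : ∀ R, TWAux.AvPart m γ R → TWAux.asum A Pg ≤ TWAux.asum A R :=
        fun R hR => TWAux.wpart_min hm hM hYh hiff hwopt hPgav hPgw hR
      have hQnePg : Pg ≠ Q := by
        intro hEq
        have hcQ : cstar ∈ Q istar := (hmemQ istar cstar).mpr (by simp)
        rw [← hEq] at hcQ
        have := hPgw istar cstar hcQ
        rw [hwstar] at this
        exact lt_irrefl _ this
      exact hns γ ((TWAux.singular_transfer γ).mpr ⟨Pg, Q, hPgav, hQav, hQnePg, heqs, hminA⟩)
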